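/- Approximate reduction to unit scale: let X be a normed space of dimension d ≥ 2 and L a positive integer. Then Γ(X) ≥ (L+2)^{-1} · ((2L)^{1/(L+1)}·(1 + L^{-1}))^{-d} · γ(X). -/

import Mathlib

open MeasureTheory Metric

set_option linter.unusedSectionVars false
set_option maxHeartbeats 1000000

/-- `ballsUnion μ C` is the measure of the union of the closed balls encoded (center, radius)
by the finite collection `C`. -/
noncomputable def ballsUnion {X : Type*} [NormedAddCommGroup X] [MeasurableSpace X]
    (μ : Measure X) (C : Finset (X × ℝ)) : ℝ :=
  (μ (⋃ p ∈ C, closedBall p.1 p.2)).toReal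

/-- A collection of (center, radius) pairs encodes pairwise disjoint closed balls. -/
def DisjointBalls {X : Type*} [NormedAddCommGroup X] (S : Finset (X × ℝ)) : Prop :=
  (S : Set (X × ℝ)).Pairwise fun p q => Disjoint (closedBall p.1 p.2) (closedBall q.1 q.2)

/-- `Phi μ C` is the largest fraction of the measure of the union of the balls of `C`
occupied by a pairwise disjoint subcollection of `C`. -/
noncomputable def Phi {X : Type*} [NormedAddCommGroup X] [MeasurableSpace X]
    (μ : Measure X) (C : Finset (X × ℝ)) : ℝ :=
  ⨆ S : {S : Finset (X × ℝ) // S ⊆ C ∧ DisjointBalls S},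
    ballsUnion μ S.1 / ballsUnion μ C

/-- `vitaliGamma μ S` is the optimal Vitali covering constant `Γ(X; S)` for finite
collections of closed balls with radii in `S`. -/
noncomputable def vitaliGamma {X : Type*} [NormedAddCommGroup X] [MeasurableSpace X]
    (μ : Measure X) (S : Set ℝ) : ℝ :=
  ⨅ C : {C : Finset (X × ℝ) // C.Nonempty ∧ ∀ p ∈ C, p.2 ∈ S}, Phi μ C.1

section VitaliAux

open Set Pointwise ENNReal

noncomputable local instance (priority := high) {α : Type*} : DecidableEq α := Classical.decEq _


variable {X : Type*} [NormedAddCommGroup X] [NormedSpace ℝ X] [FiniteDimensional ℝ X]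
    [MeasurableSpace X] [BorelSpace X] (μ : Measure X) [μ.IsAddHaarMeasure]

private lemma bU_meas (C : Finset (X × ℝ)) :
    MeasurableSet (⋃ p ∈ C, closedBall p.1 p.2) :=
  C.measurableSet_biUnion fun _ _ => measurableSet_closedBall

private lemma bU_ne_top (C : Finset (X × ℝ)) :
    μ (⋃ p ∈ C, closedBall p.1 p.2) ≠ ⊤ := by
  refine (lt_of_le_of_lt (measure_biUnion_finset_le _ _) ?_).ne
  exact ENNReal.sum_lt_top.2 fun p _ => measure_closedBall_lt_top

private lemma ballsUnion_nonneg (C : Finset (X × ℝ)) : 0 ≤ ballsUnion μ C :=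
  ENNReal.toReal_nonneg

private lemma ballsUnion_mono {S C : Finset (X × ℝ)} (h : S ⊆ C) :
    ballsUnion μ S ≤ ballsUnion μ C :=
  ENNReal.toReal_mono (bU_ne_top μ C)
    (measure_mono (Set.biUnion_subset_biUnion_left h))

private lemma finite_sub (C : Finset (X × ℝ)) :
    Finite {S : Finset (X × ℝ) // S ⊆ C ∧ DisjointBalls S} := by
  refine Finite.of_injective
    (fun S => (⟨S.1, Finset.mem_powerset.2 S.2.1⟩ : {T // T ∈ C.powerset})) ?_
  intro a b hab
  exact Subtype.ext (by simpa using congrArg Subtype.val hab)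

private lemma nonempty_sub (C : Finset (X × ℝ)) :
    Nonempty {S : Finset (X × ℝ) // S ⊆ C ∧ DisjointBalls S} :=
  ⟨⟨∅, Finset.empty_subset _, by simp [DisjointBalls]⟩⟩

private lemma phi_nonneg (C : Finset (X × ℝ)) : 0 ≤ Phi μ C :=
  Real.iSup_nonneg fun _ => div_nonneg ENNReal.toReal_nonneg ENNReal.toReal_nonneg

private lemma gamma_nonneg (S : Set ℝ) : 0 ≤ vitaliGamma μ S :=
  Real.iInf_nonneg fun C => phi_nonneg μ C.1

private lemma ratio_le_one (C : Finset (X × ℝ)) {S : Finset (X × ℝ)} (hS : S ⊆ C) :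
    ballsUnion μ S / ballsUnion μ C ≤ 1 := by
  rcases eq_or_lt_of_le (ballsUnion_nonneg μ C) with h | h
  · rw [← h]; simp
  · exact (div_le_one h).2 (ballsUnion_mono μ hS)

private lemma phi_bdd (C : Finset (X × ℝ)) :
    BddAbove (Set.range fun S : {S : Finset (X × ℝ) // S ⊆ C ∧ DisjointBalls S} =>
      ballsUnion μ S.1 / ballsUnion μ C) := by
  refine ⟨1, ?_⟩
  rintro x ⟨S, rfl⟩
  exact ratio_le_one μ C S.2.1

private lemma le_phi (C : Finset (X × ℝ)) {S : Finset (X × ℝ)}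
    (hS : S ⊆ C) (hd : DisjointBalls S) :
    ballsUnion μ S / ballsUnion μ C ≤ Phi μ C :=
  le_ciSup (phi_bdd μ C) (⟨S, hS, hd⟩ : {S : Finset (X × ℝ) // S ⊆ C ∧ DisjointBalls S})

private lemma gamma_le_phi (C : Finset (X × ℝ)) (hne : C.Nonempty)
    (h1 : ∀ p ∈ C, p.2 = 1) : vitaliGamma μ {1} ≤ Phi μ C :=
  ciInf_le ⟨0, by rintro x ⟨D, rfl⟩; exact phi_nonneg μ D.1⟩
    (⟨C, hne, fun p hp => h1 p hp⟩ :
      {C : Finset (X × ℝ) // C.Nonempty ∧ ∀ p ∈ C, p.2 ∈ ({1} : Set ℝ)})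

/-- scaling a "radius-one" collection by `t`.  -/
private lemma bU_image_smul (t : ℝ) (ht : 0 < t) (S : Finset (X × ℝ))
    (hS : ∀ p ∈ S, p.2 = 1) :
    (⋃ p ∈ S.image (fun p : X × ℝ => (t • p.1, t)), closedBall p.1 p.2)
      = t • ⋃ p ∈ S, closedBall p.1 p.2 := by
  rw [Set.smul_set_iUnion₂]
  ext x
  simp only [Set.mem_iUnion, Finset.mem_image]
  constructor
  · rintro ⟨p, ⟨r, hr, rfl⟩, hx⟩
    refine ⟨r, hr, ?_⟩
    rw [hS r hr, _root_.smul_closedBall t _ zero_le_one, Real.norm_eq_abs,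
      abs_of_pos ht, mul_one]
    exact hx
  · rintro ⟨p, hp, hx⟩
    refine ⟨(t • p.1, t), ⟨p, hp, rfl⟩, ?_⟩
    rw [hS p hp, _root_.smul_closedBall t _ zero_le_one, Real.norm_eq_abs,
      abs_of_pos ht, mul_one] at hx
    exact hx

private lemma ballsUnion_image_smul (t : ℝ) (ht : 0 < t) (S : Finset (X × ℝ))
    (hS : ∀ p ∈ S, p.2 = 1) :
    ballsUnion μ (S.image (fun p : X × ℝ => (t • p.1, t)))
      = t ^ (Module.finrank ℝ X) * ballsUnion μ S := by
  unfold ballsUnion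
  rw [bU_image_smul t ht S hS, Measure.addHaar_smul_of_nonneg μ ht.le,
    ENNReal.toReal_mul, ENNReal.toReal_ofReal (by positivity)]

private lemma disjointBalls_image_smul (t : ℝ) (ht : 0 < t) (S : Finset (X × ℝ))
    (hS : ∀ p ∈ S, p.2 = 1) (hd : DisjointBalls S) :
    DisjointBalls (S.image (fun p : X × ℝ => (t • p.1, t))) := by
  intro a ha b hb hab
  simp only [Finset.coe_image, Set.mem_image, Finset.mem_coe] at ha hb
  obtain ⟨p, hp, rfl⟩ := ha
  obtain ⟨r, hr, rfl⟩ := hb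
  have hpr : p ≠ r := by rintro rfl; exact hab rfl
  have hdis := hd hp hr hpr
  dsimp only at hdis
  rw [hS p hp] at hdis
  rw [hS r hr] at hdis
  have h1 : closedBall (t • p.1) (t : ℝ) = t • closedBall p.1 1 := by
    rw [_root_.smul_closedBall t _ zero_le_one, Real.norm_eq_abs, abs_of_pos ht, mul_one]
  have h2 : closedBall (t • r.1) (t : ℝ) = t • closedBall r.1 1 := by
    rw [_root_.smul_closedBall t _ zero_le_one, Real.norm_eq_abs, abs_of_pos ht, mul_one]
  show Disjoint (closedBall (t • p.1) t) (closedBall (t • r.1) t)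
  rw [h1, h2, ← Set.image_smul, ← Set.image_smul]
  exact Set.disjoint_image_of_injective (smul_right_injective X ht.ne') hdis

private lemma exists_good_subfamily (D : Finset (X × ℝ)) {t : ℝ} (ht : 0 < t)
    (hD : ∀ p ∈ D, p.2 = t) :
    ∃ S, S ⊆ D ∧ DisjointBalls S ∧
      vitaliGamma μ {1} * ballsUnion μ D ≤ ballsUnion μ S := by
  classical
  have hγ0 : 0 ≤ vitaliGamma μ {1} := gamma_nonneg μ _
  rcases D.eq_empty_or_nonempty with rfl | hne
  · refine ⟨∅, Finset.Subset.refl _, by simp [DisjointBalls], ?_⟩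
    simp [ballsUnion]
  set e : X × ℝ → X × ℝ := fun p => (t⁻¹ • p.1, (1 : ℝ)) with he
  set v : X × ℝ → X × ℝ := fun p => (t • p.1, t) with hv
  set D' : Finset (X × ℝ) := D.image e with hD'
  have hD'rad : ∀ p ∈ D', p.2 = 1 := by
    intro p hp; rcases Finset.mem_image.1 hp with ⟨q, _, rfl⟩; rfl
  have hD'ne : D'.Nonempty := hne.image e
  have hback : D'.image v = D := by
    rw [hD', Finset.image_image]
    have : ∀ p ∈ D, (v ∘ e) p = p := by
      intro p hp
      have : t • t⁻¹ • p.1 = p.1 := smul_inv_smul₀ ht.ne' p.1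
      simp only [Function.comp, hv, he, this]
      exact Prod.ext rfl (hD p hp).symm
    rw [Finset.image_congr (fun p hp => this p hp), Finset.image_id']
  -- γ ≤ Phi μ D', and the sup is attained
  haveI := finite_sub (X := X) D'
  haveI := nonempty_sub (X := X) D'
  obtain ⟨Smax, hmax⟩ := Finite.exists_max
    (fun S : {S : Finset (X × ℝ) // S ⊆ D' ∧ DisjointBalls S} =>
      ballsUnion μ S.1 / ballsUnion μ D')
  have hφ : vitaliGamma μ {1} ≤ ballsUnion μ Smax.1 / ballsUnion μ D' :=
    (gamma_le_phi μ D' hD'ne hD'rad).trans (ciSup_le hmax)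
  have hpos' : 0 < ballsUnion μ D' := by
    obtain ⟨p, hp⟩ := hD'ne
    apply ENNReal.toReal_pos _ (bU_ne_top μ D')
    have h1 : (0 : ℝ≥0∞) < μ (closedBall p.1 p.2) := by
      apply measure_closedBall_pos
      rw [hD'rad p hp]; exact one_pos
    have h2 : closedBall p.1 p.2 ⊆ ⋃ p ∈ D', closedBall p.1 p.2 :=
      Set.subset_biUnion_of_mem (u := fun p : X × ℝ => closedBall p.1 p.2) hp
    exact (lt_of_lt_of_le h1 (measure_mono h2)).ne'
  have hkey : vitaliGamma μ {1} * ballsUnion μ D' ≤ ballsUnion μ Smax.1 :=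
    (le_div_iff₀ hpos').1 hφ
  refine ⟨Smax.1.image v, ?_, ?_, ?_⟩
  · rw [← hback]; exact Finset.image_subset_image Smax.2.1
  · exact disjointBalls_image_smul t ht Smax.1 (fun p hp => hD'rad p (Smax.2.1 hp)) Smax.2.2
  · have h1 : ballsUnion μ D = t ^ (Module.finrank ℝ X) * ballsUnion μ D' := by
      rw [← hback]; exact (ballsUnion_image_smul μ t ht D' hD'rad)
    have h2 := ballsUnion_image_smul μ t ht Smax.1 (fun p hp => hD'rad p (Smax.2.1 hp))
    rw [h1, h2]
    calc vitaliGamma μ {1} * (t ^ Module.finrank ℝ X * ballsUnion μ D')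
        = t ^ Module.finrank ℝ X * (vitaliGamma μ {1} * ballsUnion μ D') := by ring
      _ ≤ t ^ Module.finrank ℝ X * ballsUnion μ Smax.1 := by
          exact mul_le_mul_of_nonneg_left hkey (by positivity)


private lemma exists_net {ε : ℝ} (hε : 0 < ε) (hε1 : ε < 1) :
    ∃ F : Finset X, F.Nonempty ∧ (∀ c ∈ F, c ∈ closedBall (0:X) 1) ∧
      closedBall (0:X) (2 - 2*ε) ⊆ ⋃ c ∈ F, closedBall c 1 := by
  classical
  have hcompact : IsCompact (closedBall (0:X) 1) := isCompact_closedBall 0 1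
  obtain ⟨F, hFsub, hFcov⟩ := hcompact.elim_nhds_subcover (fun c => ball c ε)
    (fun c _ => ball_mem_nhds c hε)
  have hcov : closedBall (0:X) (2 - 2*ε) ⊆ ⋃ c ∈ F, closedBall c 1 := by
    intro x hx
    rw [mem_closedBall, dist_zero_right] at hx
    have hhalf : (2:ℝ)⁻¹ • x ∈ closedBall (0:X) 1 := by
      rw [mem_closedBall, dist_zero_right, norm_smul, norm_inv, Real.norm_ofNat]
      nlinarith [norm_nonneg x]
    obtain ⟨c, hcF, hc⟩ := Set.mem_iUnion₂.1 (hFcov hhalf)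
    refine Set.mem_iUnion₂.2 ⟨c, hcF, ?_⟩
    rw [mem_closedBall]
    have hd1 : dist x ((2:ℝ)⁻¹ • x) = (2:ℝ)⁻¹ * ‖x‖ := by
      rw [dist_eq_norm]
      have : x - (2:ℝ)⁻¹ • x = (2:ℝ)⁻¹ • x := by module
      rw [this, norm_smul, norm_inv, Real.norm_ofNat]
    have hd2 : dist ((2:ℝ)⁻¹ • x) c < ε := by
      simpa [mem_ball] using hc
    calc dist x c ≤ dist x ((2:ℝ)⁻¹ • x) + dist ((2:ℝ)⁻¹ • x) c := dist_triangle _ _ _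
      _ ≤ (2:ℝ)⁻¹ * ‖x‖ + ε := by rw [hd1]; linarith
      _ ≤ 1 := by nlinarith
  have hFne : F.Nonempty := by
    rcases F.eq_empty_or_nonempty with rfl | h
    · exfalso
      have h0 : (0:X) ∈ closedBall (0:X) (2-2*ε) := mem_closedBall_self (by linarith)
      simpa using hcov h0
    · exact h
  exact ⟨F, hFne, hFsub, hcov⟩

private lemma phi_net_le {ε : ℝ} (hε : 0 < ε) (hε1 : ε < 1) (F : Finset X)
    (hF : ∀ c ∈ F, c ∈ closedBall (0 : X) 1) (hFne : F.Nonempty)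
    (hcov : closedBall (0 : X) (2 - 2*ε) ⊆ ⋃ c ∈ F, closedBall c 1) :
    vitaliGamma μ {1} * (2 - 2*ε) ^ (Module.finrank ℝ X) ≤ 1 := by
  classical
  have hγ0 : 0 ≤ vitaliGamma μ {1} := gamma_nonneg μ _
  set C : Finset (X × ℝ) := F.image (fun c => (c, (1:ℝ))) with hC
  have hCrad : ∀ p ∈ C, p.2 = 1 := by
    intro p hp; rcases Finset.mem_image.1 hp with ⟨c, _, rfl⟩; rfl
  have hCne : C.Nonempty := hFne.image _
  have hγφ : vitaliGamma μ {1} ≤ Phi μ C := gamma_le_phi μ C hCne hCrad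
  have hbig : closedBall (0 : X) (2 - 2*ε) ⊆ ⋃ p ∈ C, closedBall p.1 p.2 := by
    refine hcov.trans ?_
    intro x hx
    rcases Set.mem_iUnion₂.1 hx with ⟨c, hc, hxc⟩
    exact Set.mem_iUnion₂.2 ⟨(c, (1:ℝ)), Finset.mem_image_of_mem _ hc, hxc⟩
  set B : ℝ := (μ (ball (0:X) 1)).toReal with hB
  have hμball : (0:ℝ≥0∞) < μ (ball (0:X) 1) := measure_ball_pos μ 0 one_pos
  have hμballt : μ (ball (0:X) 1) ≠ ⊤ := measure_ball_lt_top.ne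
  have hB0 : 0 < B := ENNReal.toReal_pos hμball.ne' hμballt
  have hUC : (2 - 2*ε) ^ (Module.finrank ℝ X) * B ≤ ballsUnion μ C := by
    have hmono : μ (closedBall (0:X) (2-2*ε)) ≤ μ (⋃ p ∈ C, closedBall p.1 p.2) :=
      measure_mono hbig
    rw [Measure.addHaar_closedBall μ 0 (by linarith)] at hmono
    have h1 : ((ENNReal.ofReal ((2-2*ε) ^ Module.finrank ℝ X)) * μ (ball (0:X) 1)).toReal
        ≤ ballsUnion μ C := ENNReal.toReal_mono (bU_ne_top μ C) hmono
    rw [ENNReal.toReal_mul, ENNReal.toReal_ofReal (pow_nonneg (by linarith) _)] at h1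
    exact h1
  have hUC0 : 0 < ballsUnion μ C :=
    lt_of_lt_of_le (mul_pos (pow_pos (by linarith) _) hB0) hUC
  -- every admissible subfamily has at most one element
  have hsub : ∀ S : Finset (X × ℝ), S ⊆ C → DisjointBalls S → ballsUnion μ S ≤ B := by
    intro S hSC hSd
    rcases S.eq_empty_or_nonempty with rfl | ⟨p, hp⟩
    · unfold ballsUnion; simp; positivity
    have hS1 : S = {p} := by
      apply Finset.eq_singleton_iff_unique_mem.2 ⟨hp, ?_⟩
      intro q hq
      by_contra hqp
      have hd := hSd (Finset.mem_coe.2 hq) (Finset.mem_coe.2 hp) hqp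
      dsimp only at hd
      rcases Finset.mem_image.1 (hSC hp) with ⟨c, hc, hpc⟩
      rcases Finset.mem_image.1 (hSC hq) with ⟨c', hc', hqc⟩
      have hnc : ‖c‖ ≤ 1 := by
        have := hF c hc; rwa [mem_closedBall, dist_zero_right] at this
      have hnc' : ‖c'‖ ≤ 1 := by
        have := hF c' hc'; rwa [mem_closedBall, dist_zero_right] at this
      have hmid1 : (2:ℝ)⁻¹ • (c + c') ∈ closedBall q.1 q.2 := by
        rw [← hqc, mem_closedBall, dist_eq_norm]
        have heq : (2:ℝ)⁻¹ • (c + c') - c' = (2:ℝ)⁻¹ • (c - c') := by module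
        rw [heq, norm_smul, norm_inv, Real.norm_ofNat]
        have := norm_sub_le c c'
        nlinarith
      have hmid2 : (2:ℝ)⁻¹ • (c + c') ∈ closedBall p.1 p.2 := by
        rw [← hpc, mem_closedBall, dist_eq_norm]
        have heq : (2:ℝ)⁻¹ • (c + c') - c = (2:ℝ)⁻¹ • (c' - c) := by module
        rw [heq, norm_smul, norm_inv, Real.norm_ofNat]
        have := norm_sub_le c' c
        nlinarith
      exact Set.not_disjoint_iff.2 ⟨_, hmid1, hmid2⟩ hd
    rw [hS1]
    unfold ballsUnion
    have hrad : p.2 = 1 := hCrad p (hSC hp)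
    have hball : μ (closedBall p.1 p.2)
        = ENNReal.ofReal ((1:ℝ) ^ Module.finrank ℝ X) * μ (ball (0:X) 1) := by
      rw [show p.2 = (1:ℝ) from hrad]
      exact Measure.addHaar_closedBall μ p.1 zero_le_one
    rw [Finset.set_biUnion_singleton, hball, ENNReal.toReal_mul,
      ENNReal.toReal_ofReal (by positivity), one_pow, one_mul]
  -- Phi μ C ≤ B / ballsUnion μ C
  have hφle : Phi μ C ≤ B / ballsUnion μ C := by
    apply Real.iSup_le _ (by positivity)
    intro S
    have h := hsub S.1 S.2.1 S.2.2
    rw [div_eq_mul_inv, div_eq_mul_inv]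
    exact mul_le_mul_of_nonneg_right h (by positivity)
  have h1 : vitaliGamma μ {1} * ballsUnion μ C ≤ B :=
    (le_div_iff₀ hUC0).1 (hγφ.trans hφle)
  have h2 : vitaliGamma μ {1} * ((2 - 2*ε) ^ (Module.finrank ℝ X) * B)
      ≤ vitaliGamma μ {1} * ballsUnion μ C := mul_le_mul_of_nonneg_left hUC hγ0
  have := h2.trans h1
  nlinarith


private lemma gamma_mul_pow_le_one :
    vitaliGamma μ {1} * (2:ℝ) ^ (Module.finrank ℝ X) ≤ 1 := by
  have key : ∀ k : ℕ,
      vitaliGamma μ {1} * (2 - 2*((1:ℝ)/(k+2))) ^ (Module.finrank ℝ X) ≤ 1 := by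
    intro k
    have hk2 : (0:ℝ) < (k:ℝ) + 2 := by positivity
    have hε : (0:ℝ) < 1/((k:ℝ)+2) := by positivity
    have hε1 : (1:ℝ)/((k:ℝ)+2) < 1 := by
      rw [div_lt_one hk2]; linarith
    obtain ⟨F, hFne, hFsub, hcov⟩ := exists_net (X := X) hε hε1
    exact phi_net_le μ hε hε1 F hFsub hFne hcov
  have h1 : Filter.Tendsto (fun k : ℕ => (1:ℝ)/((k:ℝ)+2)) Filter.atTop (nhds 0) := by
    have := Filter.Tendsto.comp (tendsto_one_div_add_atTop_nhds_zero_nat (𝕜 := ℝ))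
      (Filter.tendsto_add_atTop_nat 1)
    convert this using 2 with k
    simp [Function.comp]
    push_cast
    ring
  have h2 : Filter.Tendsto
      (fun k : ℕ => vitaliGamma μ {1} * (2 - 2*((1:ℝ)/(k+2))) ^ (Module.finrank ℝ X))
      Filter.atTop (nhds (vitaliGamma μ {1} * (2:ℝ) ^ (Module.finrank ℝ X))) := by
    have h3 : Filter.Tendsto (fun k : ℕ => 2 - 2*((1:ℝ)/(k+2))) Filter.atTop (nhds 2) := by
      have := (h1.const_mul 2).const_sub 2
      simpa using this
    exact (h3.pow _).const_mul _
  exact le_of_tendsto h2 (Filter.Eventually.of_forall key)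


private lemma phi_lower (K : ℕ) (hK : 1 ≤ K) (C : Finset (X × ℝ)) (hC : C.Nonempty)
    (hpos : ∀ p ∈ C, 0 < p.2) :
    vitaliGamma μ {1} /
      (((K:ℝ) + 1) * (1 + vitaliGamma μ {1} * (1 + (K:ℝ)⁻¹) ^ Module.finrank ℝ X) *
        ((2 * (K:ℝ)) ^ (1 / ((K:ℝ) + 1))) ^ Module.finrank ℝ X) ≤ Phi μ C := by
  classical
  set n := Module.finrank ℝ X with hn
  set γ := vitaliGamma μ {1} with hγ
  have hγ0 : 0 ≤ γ := gamma_nonneg μ _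
  have hK0 : (0:ℝ) < K := by exact_mod_cast hK
  set q : ℝ := (2 * (K:ℝ)) ^ (1 / ((K:ℝ) + 1)) with hqdef
  have h2K : (1:ℝ) < 2 * K := by
    have : (1:ℝ) ≤ K := by exact_mod_cast hK
    linarith
  have hq1 : 1 < q := by
    rw [hqdef]
    exact Real.one_lt_rpow_iff_of_pos (by linarith) |>.2 (Or.inl ⟨h2K, by positivity⟩)
  have hq0 : (0:ℝ) < q := lt_trans one_pos hq1
  have hqpow : q ^ (K + 1) = 2 * K := by
    rw [hqdef, ← Real.rpow_natCast ((2*(K:ℝ)) ^ (1/((K:ℝ)+1))) (K+1),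
      ← Real.rpow_mul (by positivity)]
    push_cast
    rw [one_div_mul_cancel (by positivity), Real.rpow_one]
  obtain ⟨p₀, hp₀⟩ := hC
  set R : ℝ := C.sup' ⟨p₀, hp₀⟩ (fun p => p.2) with hRdef
  have hR0 : 0 < R := lt_of_lt_of_le (hpos p₀ hp₀) (Finset.le_sup' _ hp₀)
  set scl : X × ℝ → ℕ := fun p => ⌊Real.logb q (R / p.2)⌋₊ with hscl
  set h : ℕ → ℝ := fun j => R / q ^ j with hh
  have hh0 : ∀ j, 0 < h j := fun j => div_pos hR0 (pow_pos hq0 j)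
  have hble : ∀ p ∈ C, p.2 ≤ h (scl p) ∧ h (scl p) < q * p.2 := by
    intro p hp
    have hp2 : 0 < p.2 := hpos p hp
    have hpR : p.2 ≤ R := Finset.le_sup' _ hp
    have hx0 : 1 ≤ R / p.2 := (one_le_div hp2).2 hpR
    have hlog0 : 0 ≤ Real.logb q (R / p.2) := Real.logb_nonneg hq1 hx0
    have h1 : (scl p : ℝ) ≤ Real.logb q (R / p.2) := Nat.floor_le hlog0
    have h2 : Real.logb q (R / p.2) < scl p + 1 := Nat.lt_floor_add_one _
    have e1 : q ^ scl p ≤ R / p.2 := by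
      have e := Real.rpow_le_rpow_of_exponent_le hq1.le h1
      rw [Real.rpow_logb (by positivity) (ne_of_gt hq1) (by positivity)] at e
      rwa [Real.rpow_natCast q (scl p)] at e
    have e2 : R / p.2 < q ^ (scl p + 1) := by
      have e := Real.rpow_lt_rpow_of_exponent_lt hq1 h2
      rw [Real.rpow_logb (by positivity) (ne_of_gt hq1) (by positivity)] at e
      have : ((scl p : ℝ) + 1) = ((scl p + 1 : ℕ) : ℝ) := by push_cast; ring
      rw [this, Real.rpow_natCast q (scl p + 1)] at e
      exact e
    constructor
    · rw [hh]
      rw [le_div_iff₀ (pow_pos hq0 _)]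
      calc p.2 * q ^ scl p ≤ p.2 * (R / p.2) := by
            exact mul_le_mul_of_nonneg_left e1 hp2.le
        _ = R := by rw [mul_comm]; exact div_mul_cancel₀ R hp2.ne'
    · rw [hh]
      rw [div_lt_iff₀ (pow_pos hq0 _)]
      have : R < q ^ (scl p + 1) * p.2 := by
        rw [div_lt_iff₀ hp2] at e2; exact e2
      calc R < q ^ (scl p + 1) * p.2 := this
        _ = q * p.2 * q ^ scl p := by rw [pow_succ]; ring
  have hgap : ∀ i j : ℕ, i < j → i % (K+1) = j % (K+1) → 2 * (K:ℝ) * h j ≤ h i := by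
    intro i j hij hmod
    have hdvd : (K+1) ∣ (j - i) := (Nat.modEq_iff_dvd' hij.le).1 hmod
    have hKj : K + 1 ≤ j - i := Nat.le_of_dvd (Nat.sub_pos_of_lt hij) hdvd
    have hqq : q ^ (K+1) ≤ q ^ (j - i) := pow_le_pow_right₀ hq1.le hKj
    have hqne : q ≠ 0 := ne_of_gt hq0
    have hpow : q ^ j = q ^ (j - i) * q ^ i := by
      rw [← pow_add, Nat.sub_add_cancel hij.le]
    have hi : h i = q ^ (j-i) * h j := by
      rw [hh]
      dsimp only
      rw [hpow]
      rw [← div_div, mul_div_assoc', mul_div_cancel₀ _ (pow_ne_zero _ hqne)]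
    rw [hi, ← hqpow]
    exact mul_le_mul_of_nonneg_right hqq (hh0 j).le
  -- residue classes
  set Dr : ℕ → Finset (X × ℝ) := fun r => C.filter (fun p => scl p % (K+1) = r) with hDr
  have hcover : (⋃ p ∈ C, closedBall p.1 p.2)
      = ⋃ r ∈ Finset.range (K+1), ⋃ p ∈ Dr r, closedBall p.1 p.2 := by
    ext x
    simp only [Set.mem_iUnion, Finset.mem_range, Finset.mem_filter, hDr]
    constructor
    · rintro ⟨p, hp, hx⟩
      exact ⟨scl p % (K+1), Nat.mod_lt _ (Nat.succ_pos K), p, ⟨hp, rfl⟩, hx⟩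
    · rintro ⟨r, -, p, ⟨hp, -⟩, hx⟩
      exact ⟨p, hp, hx⟩
  obtain ⟨r₀, hr₀mem, hr₀⟩ := Finset.exists_max_image (Finset.range (K+1))
    (fun r => μ (⋃ p ∈ Dr r, closedBall p.1 p.2)) ⟨0, Finset.mem_range.2 (Nat.succ_pos K)⟩
  have hUsum : μ (⋃ p ∈ C, closedBall p.1 p.2)
      ≤ (K+1 : ℝ≥0∞) * μ (⋃ p ∈ Dr r₀, closedBall p.1 p.2) := by
    rw [hcover]
    calc μ (⋃ r ∈ Finset.range (K+1), ⋃ p ∈ Dr r, closedBall p.1 p.2)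
        ≤ ∑ r ∈ Finset.range (K+1), μ (⋃ p ∈ Dr r, closedBall p.1 p.2) :=
          measure_biUnion_finset_le _ _
      _ ≤ ∑ _r ∈ Finset.range (K+1), μ (⋃ p ∈ Dr r₀, closedBall p.1 p.2) :=
          Finset.sum_le_sum (fun r hr => hr₀ r hr)
      _ = (K+1 : ℝ≥0∞) * μ (⋃ p ∈ Dr r₀, closedBall p.1 p.2) := by
          rw [Finset.sum_const, Finset.card_range, nsmul_eq_mul]
          norm_cast
  set D := Dr r₀ with hD
  have hDC : D ⊆ C := Finset.filter_subset _ _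
  have hDmod : ∀ p ∈ D, scl p % (K+1) = r₀ := fun p hp => (Finset.mem_filter.1 hp).2
  set g : ℝ≥0∞ := ENNReal.ofReal γ with hg
  set hatr : X × ℝ → ℝ := fun p => h (scl p) with hhatr
  set ehatr : X × ℝ → ℝ := fun p => (1 + (K:ℝ)⁻¹) * h (scl p) with hehatr
  -- core induction over the set of scales
  have core : ∀ J : Finset ℕ, ∃ T : Finset (X × ℝ),
      T ⊆ D.filter (fun p => scl p ∈ J) ∧
      ((T : Set (X × ℝ)).Pairwise fun p p' =>
        Disjoint (closedBall p.1 (hatr p)) (closedBall p'.1 (hatr p'))) ∧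
      g * μ ((⋃ p ∈ D.filter (fun p => scl p ∈ J), closedBall p.1 p.2) \
          ⋃ p ∈ T, closedBall p.1 (ehatr p))
        ≤ μ (⋃ p ∈ T, closedBall p.1 (hatr p)) := by
    intro J
    induction J using Finset.induction_on_max with
    | empty =>
      refine ⟨∅, by simp, by simp, ?_⟩
      simp
    | insert j J' hmax IH =>
      obtain ⟨T', hT'sub, hT'disj, hT'meas⟩ := IH
      have hT'scl : ∀ p ∈ T', scl p ∈ J' := fun p hp => (Finset.mem_filter.1 (hT'sub hp)).2
      have hT'D : ∀ p ∈ T', p ∈ D := fun p hp => (Finset.mem_filter.1 (hT'sub hp)).1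
      set Dj := D.filter (fun p => scl p = j) with hDj
      set W : Set X := ⋃ p ∈ T', closedBall p.1 (ehatr p) with hW
      set G' := Dj.filter (fun p => ∀ p' ∈ T',
        Disjoint (closedBall p.1 (h j)) (closedBall p'.1 (hatr p'))) with hG'
      set f : X × ℝ → X × ℝ := fun p => (p.1, h j) with hf
      obtain ⟨Shat, hSsub, hSdisj, hSmeas⟩ := exists_good_subfamily μ (G'.image f) (hh0 j)
        (by intro p hp; rcases Finset.mem_image.1 hp with ⟨r, _, rfl⟩; rfl)
      set pk : X × ℝ → X × ℝ := fun b =>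
        if hb : ∃ p ∈ G', f p = b then hb.choose else b with hpk
      have hpk_spec : ∀ b ∈ Shat, pk b ∈ G' ∧ f (pk b) = b := by
        intro b hb
        have hbex : ∃ p ∈ G', f p = b := by
          rcases Finset.mem_image.1 (hSsub hb) with ⟨p, hp, hfp⟩
          exact ⟨p, hp, hfp⟩
        rw [hpk]
        simp only [dif_pos hbex]
        exact hbex.choose_spec
      set S := Shat.image pk with hS
      have hSmem : ∀ s ∈ S, s ∈ G' ∧ f s ∈ Shat := by
        intro s hs
        rcases Finset.mem_image.1 hs with ⟨b, hb, rfl⟩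
        obtain ⟨h1, h2⟩ := hpk_spec b hb
        exact ⟨h1, by rw [h2]; exact hb⟩
      have hG'Dj : ∀ p ∈ G', p ∈ Dj := fun p hp => (Finset.mem_filter.1 hp).1
      have hG'prop : ∀ p ∈ G', ∀ p' ∈ T',
          Disjoint (closedBall p.1 (h j)) (closedBall p'.1 (hatr p')) :=
        fun p hp => (Finset.mem_filter.1 hp).2
      have hG'scl : ∀ p ∈ G', scl p = j := fun p hp => (Finset.mem_filter.1 (hG'Dj p hp)).2
      have hSscl : ∀ s ∈ S, scl s = j := fun s hs => hG'scl s (hSmem s hs).1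
      have hShatr : ∀ s ∈ S, hatr s = h j := fun s hs => by
        rw [hhatr]; dsimp only; rw [hSscl s hs]
      have hUS : (⋃ p ∈ S, closedBall p.1 (hatr p)) = ⋃ b ∈ Shat, closedBall b.1 b.2 := by
        apply Set.Subset.antisymm
        · intro x hx
          rcases Set.mem_iUnion₂.1 hx with ⟨s, hs, hxs⟩
          refine Set.mem_iUnion₂.2 ⟨f s, (hSmem s hs).2, ?_⟩
          rw [hShatr s hs] at hxs
          exact hxs
        · intro x hx
          rcases Set.mem_iUnion₂.1 hx with ⟨b, hb, hxb⟩
          refine Set.mem_iUnion₂.2 ⟨pk b, Finset.mem_image_of_mem pk hb, ?_⟩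
          have h2 := (hpk_spec b hb).2
          rw [hShatr _ (Finset.mem_image_of_mem pk hb)]
          rw [← h2] at hxb
          exact hxb
      have hcross : ∀ s ∈ S, ∀ p' ∈ T',
          Disjoint (closedBall s.1 (hatr s)) (closedBall p'.1 (hatr p')) := by
        intro s hs p' hp'
        rw [hShatr s hs]
        exact hG'prop s (hSmem s hs).1 p' hp'
      set T := T' ∪ S with hT
      have hTdisj : ((T : Set (X × ℝ)).Pairwise fun p p' =>
          Disjoint (closedBall p.1 (hatr p)) (closedBall p'.1 (hatr p'))) := by
        intro a ha b hb hab
        have ha' := Finset.mem_union.1 (Finset.mem_coe.1 ha)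
        have hb' := Finset.mem_union.1 (Finset.mem_coe.1 hb)
        rcases ha' with haT | haS <;> rcases hb' with hbT | hbS
        · exact hT'disj (Finset.mem_coe.2 haT) (Finset.mem_coe.2 hbT) hab
        · exact (hcross b hbS a haT).symm
        · exact hcross a haS b hbT
        · obtain ⟨ba, hba, rfl⟩ := Finset.mem_image.1 haS
          obtain ⟨bb, hbb, rfl⟩ := Finset.mem_image.1 hbS
          have hfa := (hpk_spec ba hba).2
          have hfb := (hpk_spec bb hbb).2
          have hne : ba ≠ bb := by
            rintro rfl; exact hab rfl
          have hd := hSdisj (Finset.mem_coe.2 hba) (Finset.mem_coe.2 hbb) hne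
          dsimp only at hd
          rw [hShatr _ haS, hShatr _ hbS]
          rw [← hfa, ← hfb] at hd
          exact hd
      have hfilter_split : D.filter (fun p => scl p ∈ insert j J')
          = Dj ∪ D.filter (fun p => scl p ∈ J') := by
        ext p
        simp only [Finset.mem_filter, Finset.mem_union, Finset.mem_insert, hDj]
        tauto
      have hAjW : (⋃ p ∈ Dj, closedBall p.1 p.2) \ W ⊆ ⋃ p ∈ G', closedBall p.1 (h j) := by
        rintro x ⟨hx, hxW⟩
        rcases Set.mem_iUnion₂.1 hx with ⟨p, hp, hxp⟩
        have hpD : p ∈ D := (Finset.mem_filter.1 hp).1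
        have hpscl : scl p = j := (Finset.mem_filter.1 hp).2
        have hpC : p ∈ C := hDC hpD
        have hpball : closedBall p.1 p.2 ⊆ closedBall p.1 (h j) :=
          closedBall_subset_closedBall (by rw [← hpscl]; exact (hble p hpC).1)
        have hpG' : p ∈ G' := by
          rw [hG', Finset.mem_filter]
          refine ⟨hp, ?_⟩
          intro p' hp'
          by_contra hnd
          have hp'D : p' ∈ D := hT'D p' hp'
          have hp'scl_lt : scl p' < j := hmax _ (hT'scl p' hp')
          have hmod : scl p' % (K+1) = j % (K+1) := by
            rw [hDmod p' hp'D, ← hpscl, hDmod p hpD]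
          have hgap' := hgap (scl p') j hp'scl_lt hmod
          obtain ⟨z, hz1, hz2⟩ := Set.not_disjoint_iff.1 hnd
          have hsubball : closedBall p.1 (h j) ⊆ closedBall p'.1 (ehatr p') := by
            intro w hw
            rw [mem_closedBall] at hw hz1 hz2 ⊢
            have hd1 : dist w p'.1 ≤ dist w p.1 + dist p.1 z + dist z p'.1 :=
              dist_triangle4 w p.1 z p'.1
            have hdz : dist p.1 z ≤ h j := by rw [dist_comm]; exact hz1
            have hK1 : 2 * h j ≤ (K:ℝ)⁻¹ * h (scl p') := by
              rw [inv_mul_eq_div, le_div_iff₀ hK0]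
              calc 2 * h j * K = 2 * K * h j := by ring
                _ ≤ h (scl p') := hgap'
            rw [hehatr]
            dsimp only
            calc dist w p'.1 ≤ dist w p.1 + dist p.1 z + dist z p'.1 := hd1
              _ ≤ h j + h j + h (scl p') := by
                  have : hatr p' = h (scl p') := rfl
                  rw [this] at hz2
                  exact add_le_add (add_le_add hw hdz) hz2
              _ ≤ (1 + (K:ℝ)⁻¹) * h (scl p') := by nlinarith [hh0 (scl p'), hh0 j]
          have hxW' : x ∈ W := by
            rw [hW]
            exact Set.mem_iUnion₂.2 ⟨p', hp', hsubball (hpball hxp)⟩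
          exact hxW hxW'
        exact Set.mem_iUnion₂.2 ⟨p, hpG', hpball hxp⟩
      have hG'union : (⋃ b ∈ G'.image f, closedBall b.1 b.2)
          = ⋃ p ∈ G', closedBall p.1 (h j) := by
        apply Set.Subset.antisymm
        · intro x hx
          rcases Set.mem_iUnion₂.1 hx with ⟨b, hb, hxb⟩
          rcases Finset.mem_image.1 hb with ⟨p, hp, rfl⟩
          exact Set.mem_iUnion₂.2 ⟨p, hp, hxb⟩
        · intro x hx
          rcases Set.mem_iUnion₂.1 hx with ⟨p, hp, hxp⟩
          exact Set.mem_iUnion₂.2 ⟨f p, Finset.mem_image_of_mem f hp, hxp⟩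
      have hcapture : g * μ ((⋃ p ∈ Dj, closedBall p.1 p.2) \ W)
          ≤ μ (⋃ p ∈ S, closedBall p.1 (hatr p)) := by
        rw [hUS]
        calc g * μ ((⋃ p ∈ Dj, closedBall p.1 p.2) \ W)
            ≤ g * μ (⋃ b ∈ G'.image f, closedBall b.1 b.2) :=
              mul_le_mul_right (measure_mono (by rw [hG'union]; exact hAjW)) g
          _ ≤ μ (⋃ b ∈ Shat, closedBall b.1 b.2) := by
              rw [hg]
              have hne1 := bU_ne_top μ (G'.image f)
              have hne2 := bU_ne_top μ Shat
              rw [← ENNReal.ofReal_toReal hne1, ← ENNReal.ofReal_toReal hne2,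
                ← ENNReal.ofReal_mul hγ0]
              exact ENNReal.ofReal_le_ofReal hSmeas
      refine ⟨T, ?_, hTdisj, ?_⟩
      · rw [hT]
        apply Finset.union_subset
        · refine hT'sub.trans (Finset.monotone_filter_right _ ?_)
          intro p _ hp
          exact Finset.mem_insert_of_mem hp
        · intro s hs
          rw [Finset.mem_filter]
          exact ⟨(Finset.mem_filter.1 (hG'Dj s (hSmem s hs).1)).1,
            Finset.mem_insert.2 (Or.inl (hSscl s hs))⟩
      · have hW'W : W ⊆ ⋃ p ∈ T, closedBall p.1 (ehatr p) := by
          rw [hW, hT]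
          intro x hx
          rcases Set.mem_iUnion₂.1 hx with ⟨p, hp, hxp⟩
          exact Set.mem_iUnion₂.2 ⟨p, Finset.mem_union_left _ hp, hxp⟩
        have hT_split : (⋃ p ∈ T, closedBall p.1 (hatr p))
            = (⋃ p ∈ T', closedBall p.1 (hatr p)) ∪ (⋃ p ∈ S, closedBall p.1 (hatr p)) := by
          rw [hT]
          exact Finset.set_biUnion_union _ _ _
        have hdisjTS : Disjoint (⋃ p ∈ T', closedBall p.1 (hatr p))
            (⋃ p ∈ S, closedBall p.1 (hatr p)) := by
          rw [Set.disjoint_left]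
          rintro x hx1 hx2
          rcases Set.mem_iUnion₂.1 hx1 with ⟨p', hp', hxp'⟩
          rcases Set.mem_iUnion₂.1 hx2 with ⟨s, hs, hxs⟩
          exact Set.disjoint_left.1 (hcross s hs p' hp') hxs hxp'
        have hμsplit : μ (⋃ p ∈ T, closedBall p.1 (hatr p))
            = μ (⋃ p ∈ T', closedBall p.1 (hatr p)) + μ (⋃ p ∈ S, closedBall p.1 (hatr p)) := by
          rw [hT_split]
          exact measure_union hdisjTS (S.measurableSet_biUnion fun _ _ => measurableSet_closedBall)
        have hincl : (⋃ p ∈ D.filter (fun p => scl p ∈ insert j J'), closedBall p.1 p.2)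
              \ (⋃ p ∈ T, closedBall p.1 (ehatr p))
            ⊆ ((⋃ p ∈ D.filter (fun p => scl p ∈ J'), closedBall p.1 p.2) \ W)
              ∪ ((⋃ p ∈ Dj, closedBall p.1 p.2) \ W) := by
          rintro x ⟨hx, hxW⟩
          have hxW' : x ∉ W := fun hxx => hxW (hW'W hxx)
          rw [hfilter_split] at hx
          rcases Set.mem_iUnion₂.1 hx with ⟨p, hp, hxp⟩
          rcases Finset.mem_union.1 hp with hpj | hpJ'
          · exact Or.inr ⟨Set.mem_iUnion₂.2 ⟨p, hpj, hxp⟩, hxW'⟩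
          · exact Or.inl ⟨Set.mem_iUnion₂.2 ⟨p, hpJ', hxp⟩, hxW'⟩
        calc g * μ ((⋃ p ∈ D.filter (fun p => scl p ∈ insert j J'), closedBall p.1 p.2)
              \ (⋃ p ∈ T, closedBall p.1 (ehatr p)))
            ≤ g * (μ ((⋃ p ∈ D.filter (fun p => scl p ∈ J'), closedBall p.1 p.2) \ W)
                + μ ((⋃ p ∈ Dj, closedBall p.1 p.2) \ W)) :=
              mul_le_mul_right ((measure_mono hincl).trans (measure_union_le _ _)) g
          _ = g * μ ((⋃ p ∈ D.filter (fun p => scl p ∈ J'), closedBall p.1 p.2) \ W)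
                + g * μ ((⋃ p ∈ Dj, closedBall p.1 p.2) \ W) := mul_add _ _ _
          _ ≤ μ (⋃ p ∈ T', closedBall p.1 (hatr p)) + μ (⋃ p ∈ S, closedBall p.1 (hatr p)) :=
              add_le_add hT'meas hcapture
          _ = μ (⋃ p ∈ T, closedBall p.1 (hatr p)) := hμsplit.symm
  -- apply the induction to all scales
  obtain ⟨T, hTsub, hThat, hTmeas⟩ := core (D.image scl)
  have hDfull : D.filter (fun p => scl p ∈ D.image scl) = D :=
    Finset.filter_true_of_mem (fun p hp => Finset.mem_image_of_mem _ hp)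
  rw [hDfull] at hTsub hTmeas
  have hTC : T ⊆ C := hTsub.trans hDC
  have horig : ∀ p ∈ T, closedBall p.1 p.2 ⊆ closedBall p.1 (hatr p) :=
    fun p hp => closedBall_subset_closedBall (hble p (hTC hp)).1
  have hTdisjo : DisjointBalls T := by
    intro a ha b hb hab
    exact (hThat ha hb hab).mono (horig a (Finset.mem_coe.1 ha)) (horig b (Finset.mem_coe.1 hb))
  set A : ℝ := (1 + (K:ℝ)⁻¹) ^ n with hA
  have hKinv0 : (0:ℝ) ≤ (K:ℝ)⁻¹ := by positivity
  have hA0 : (0:ℝ) ≤ A := by positivity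
  have hehat_meas : ∀ p : X × ℝ, μ (closedBall p.1 (ehatr p))
      = ENNReal.ofReal A * μ (closedBall p.1 (hatr p)) := by
    intro p
    rw [Measure.addHaar_closedBall μ _ (by positivity : (0:ℝ) ≤ (1 + (K:ℝ)⁻¹) * h (scl p)),
      Measure.addHaar_closedBall μ _ (hh0 (scl p)).le,
      ← mul_assoc, ← ENNReal.ofReal_mul hA0]
    congr 2
    rw [hA, mul_pow]
  have hWleq : μ (⋃ p ∈ T, closedBall p.1 (ehatr p))
      ≤ ENNReal.ofReal A * μ (⋃ p ∈ T, closedBall p.1 (hatr p)) := by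
    calc μ (⋃ p ∈ T, closedBall p.1 (ehatr p))
        ≤ ∑ p ∈ T, μ (closedBall p.1 (ehatr p)) := measure_biUnion_finset_le _ _
      _ = ∑ p ∈ T, ENNReal.ofReal A * μ (closedBall p.1 (hatr p)) :=
          Finset.sum_congr rfl (fun p _ => hehat_meas p)
      _ = ENNReal.ofReal A * ∑ p ∈ T, μ (closedBall p.1 (hatr p)) := by
          rw [Finset.mul_sum]
      _ = ENNReal.ofReal A * μ (⋃ p ∈ T, closedBall p.1 (hatr p)) := by
          rw [measure_biUnion_finset hThat (fun p _ => measurableSet_closedBall)]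
  have hhat_orig : ∀ p ∈ T, μ (closedBall p.1 (hatr p))
      ≤ ENNReal.ofReal (q ^ n) * μ (closedBall p.1 p.2) := by
    intro p hp
    rw [Measure.addHaar_closedBall μ _ (hh0 (scl p)).le,
      Measure.addHaar_closedBall μ _ (hpos p (hTC hp)).le,
      ← mul_assoc, ← ENNReal.ofReal_mul (by positivity : (0:ℝ) ≤ q ^ n)]
    refine mul_le_mul_left (ENNReal.ofReal_le_ofReal ?_) _
    rw [← mul_pow]
    exact pow_le_pow_left₀ (hh0 (scl p)).le (hble p (hTC hp)).2.le n
  have hhatU : μ (⋃ p ∈ T, closedBall p.1 (hatr p))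
      ≤ ENNReal.ofReal (q ^ n) * μ (⋃ p ∈ T, closedBall p.1 p.2) := by
    calc μ (⋃ p ∈ T, closedBall p.1 (hatr p))
        ≤ ∑ p ∈ T, μ (closedBall p.1 (hatr p)) := measure_biUnion_finset_le _ _
      _ ≤ ∑ p ∈ T, ENNReal.ofReal (q ^ n) * μ (closedBall p.1 p.2) :=
          Finset.sum_le_sum hhat_orig
      _ = ENNReal.ofReal (q ^ n) * ∑ p ∈ T, μ (closedBall p.1 p.2) := by
          rw [Finset.mul_sum]
      _ = ENNReal.ofReal (q ^ n) * μ (⋃ p ∈ T, closedBall p.1 p.2) := by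
          rw [measure_biUnion_finset hTdisjo (fun p _ => measurableSet_closedBall)]
  have hUD2 : g * μ (⋃ p ∈ D, closedBall p.1 p.2)
      ≤ μ (⋃ p ∈ T, closedBall p.1 (hatr p))
        + g * (ENNReal.ofReal A * μ (⋃ p ∈ T, closedBall p.1 (hatr p))) := by
    have h1 : μ (⋃ p ∈ D, closedBall p.1 p.2)
        ≤ μ ((⋃ p ∈ D, closedBall p.1 p.2) \ ⋃ p ∈ T, closedBall p.1 (ehatr p))
          + μ (⋃ p ∈ T, closedBall p.1 (ehatr p)) :=
      (measure_mono (Set.subset_diff_union _ _)).trans (measure_union_le _ _)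
    calc g * μ (⋃ p ∈ D, closedBall p.1 p.2)
        ≤ g * (μ ((⋃ p ∈ D, closedBall p.1 p.2) \ ⋃ p ∈ T, closedBall p.1 (ehatr p))
            + μ (⋃ p ∈ T, closedBall p.1 (ehatr p))) := mul_le_mul_right h1 g
      _ = g * μ ((⋃ p ∈ D, closedBall p.1 p.2) \ ⋃ p ∈ T, closedBall p.1 (ehatr p))
            + g * μ (⋃ p ∈ T, closedBall p.1 (ehatr p)) := mul_add _ _ _
      _ ≤ μ (⋃ p ∈ T, closedBall p.1 (hatr p))
            + g * (ENNReal.ofReal A * μ (⋃ p ∈ T, closedBall p.1 (hatr p))) :=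
          add_le_add hTmeas (mul_le_mul_right hWleq g)
  have hfinal : g * μ (⋃ p ∈ C, closedBall p.1 p.2)
      ≤ ((K:ℝ≥0∞) + 1) * ((1 + g * ENNReal.ofReal A)
          * (ENNReal.ofReal (q ^ n) * μ (⋃ p ∈ T, closedBall p.1 p.2))) := by
    calc g * μ (⋃ p ∈ C, closedBall p.1 p.2)
        ≤ g * ((K + 1 : ℝ≥0∞) * μ (⋃ p ∈ D, closedBall p.1 p.2)) := mul_le_mul_right hUsum g
      _ = ((K:ℝ≥0∞) + 1) * (g * μ (⋃ p ∈ D, closedBall p.1 p.2)) := by ring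
      _ ≤ ((K:ℝ≥0∞) + 1) * (μ (⋃ p ∈ T, closedBall p.1 (hatr p))
            + g * (ENNReal.ofReal A * μ (⋃ p ∈ T, closedBall p.1 (hatr p)))) :=
          mul_le_mul_right hUD2 _
      _ = ((K:ℝ≥0∞) + 1) * ((1 + g * ENNReal.ofReal A)
            * μ (⋃ p ∈ T, closedBall p.1 (hatr p))) := by ring
      _ ≤ ((K:ℝ≥0∞) + 1) * ((1 + g * ENNReal.ofReal A)
            * (ENNReal.ofReal (q ^ n) * μ (⋃ p ∈ T, closedBall p.1 p.2))) :=
          mul_le_mul_right (mul_le_mul_right hhatU _) _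
  set c : ℝ := ((K:ℝ) + 1) * (1 + γ * A) * q ^ n with hc
  have h1γA : (0:ℝ) < 1 + γ * A := by nlinarith
  have hc0 : 0 < c := by
    have hK1 : (0:ℝ) < (K:ℝ) + 1 := by positivity
    have hq' : (0:ℝ) < q ^ n := by positivity
    exact _root_.mul_pos (_root_.mul_pos hK1 h1γA) hq'
  have hconst : ((K:ℝ≥0∞) + 1) * ((1 + g * ENNReal.ofReal A) * ENNReal.ofReal (q ^ n))
      = ENNReal.ofReal c := by
    have e1 : (1 + g * ENNReal.ofReal A) = ENNReal.ofReal (1 + γ * A) := by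
      rw [ENNReal.ofReal_add zero_le_one (mul_nonneg hγ0 hA0), ENNReal.ofReal_one,
        ENNReal.ofReal_mul hγ0, hg]
    have e2 : ((K:ℝ≥0∞) + 1) = ENNReal.ofReal ((K:ℝ) + 1) := by
      rw [ENNReal.ofReal_add (by positivity) zero_le_one, ENNReal.ofReal_one,
        ENNReal.ofReal_natCast]
    rw [e1, e2, ← ENNReal.ofReal_mul h1γA.le,
      ← ENNReal.ofReal_mul (by positivity : (0:ℝ) ≤ (K:ℝ) + 1)]
    congr 1
    rw [hc]; ring
  have hreal : γ * ballsUnion μ C ≤ c * ballsUnion μ T := by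
    have h2 : g * μ (⋃ p ∈ C, closedBall p.1 p.2)
        ≤ ENNReal.ofReal c * μ (⋃ p ∈ T, closedBall p.1 p.2) := by
      have hassoc : ((K:ℝ≥0∞) + 1) * ((1 + g * ENNReal.ofReal A)
            * (ENNReal.ofReal (q ^ n) * μ (⋃ p ∈ T, closedBall p.1 p.2)))
          = (((K:ℝ≥0∞) + 1) * ((1 + g * ENNReal.ofReal A) * ENNReal.ofReal (q ^ n)))
            * μ (⋃ p ∈ T, closedBall p.1 p.2) := by ring
      rw [hassoc, hconst] at hfinal
      exact hfinal
    have hne : ENNReal.ofReal c * μ (⋃ p ∈ T, closedBall p.1 p.2) ≠ ⊤ :=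
      ENNReal.mul_ne_top ENNReal.ofReal_ne_top (bU_ne_top μ T)
    have h3 := ENNReal.toReal_mono hne h2
    rw [ENNReal.toReal_mul, ENNReal.toReal_mul, hg, ENNReal.toReal_ofReal hγ0,
      ENNReal.toReal_ofReal hc0.le] at h3
    exact h3
  have hU0 : 0 < ballsUnion μ C := by
    apply ENNReal.toReal_pos _ (bU_ne_top μ C)
    have h1 : (0:ℝ≥0∞) < μ (closedBall p₀.1 p₀.2) := measure_closedBall_pos μ p₀.1 (hpos p₀ hp₀)
    have h2 : closedBall p₀.1 p₀.2 ⊆ ⋃ p ∈ C, closedBall p.1 p.2 :=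
      Set.subset_biUnion_of_mem (u := fun p : X × ℝ => closedBall p.1 p.2) hp₀
    exact (lt_of_lt_of_le h1 (measure_mono h2)).ne'
  have hdiv : γ / c ≤ ballsUnion μ T / ballsUnion μ C := by
    rw [div_le_div_iff₀ hc0 hU0]
    calc γ * ballsUnion μ C ≤ c * ballsUnion μ T := hreal
      _ = ballsUnion μ T * c := mul_comm _ _
  exact hdiv.trans (le_phi μ C hTC hTdisjo)

private lemma gamma_Ioi_ge (K : ℕ) (hK : 1 ≤ K) :
    vitaliGamma μ {1} /
      (((K:ℝ) + 1) * (1 + vitaliGamma μ {1} * (1 + (K:ℝ)⁻¹) ^ Module.finrank ℝ X) *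
        ((2 * (K:ℝ)) ^ (1 / ((K:ℝ) + 1))) ^ Module.finrank ℝ X)
      ≤ vitaliGamma μ (Set.Ioi 0) := by
  haveI : Nonempty {C : Finset (X × ℝ) // C.Nonempty ∧ ∀ p ∈ C, p.2 ∈ Set.Ioi (0:ℝ)} :=
    ⟨⟨{((0:X), (1:ℝ))}, Finset.singleton_nonempty _, by
      intro p hp
      rw [Finset.mem_singleton] at hp
      rw [hp]
      exact Set.mem_Ioi.2 one_pos⟩⟩
  exact le_ciInf fun C => phi_lower μ K hK C.1 C.2.1 (fun p hp => Set.mem_Ioi.1 (C.2.2 p hp))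

end VitaliAux

/-- Approximate reduction to unit scale: if `X` is a normed space of dimension `d ≥ 2` and
`L` a positive integer, then `Γ(X) ≥ (L+2)⁻¹·((2L)^{1/(L+1)}·(1+L⁻¹))^{-d}·γ(X)`. -/
theorem stmt_16 {X : Type*} [NormedAddCommGroup X] [NormedSpace ℝ X] [FiniteDimensional ℝ X]
    [MeasurableSpace X] [BorelSpace X] (μ : Measure X) [μ.IsAddHaarMeasure]
    (d : ℕ) (hd : Module.finrank ℝ X = d) (h2 : 2 ≤ d) (L : ℕ) (hL : 1 ≤ L) :
    ((L : ℝ) + 2)⁻¹ * (((2 * (L : ℝ)) ^ (1 / ((L : ℝ) + 1)) * (1 + (L : ℝ)⁻¹))⁻¹) ^ d *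
        vitaliGamma μ {1}
      ≤ vitaliGamma μ (Set.Ioi 0) := by
  set γ := vitaliGamma μ {1} with hγdef
  have hγ0 : 0 ≤ γ := gamma_nonneg μ _
  have hγ2 : γ * 2 ^ d ≤ 1 := by
    have := gamma_mul_pow_le_one μ
    rwa [hd] at this
  have hmain : ∀ K : ℕ, 1 ≤ K →
      γ / (((K:ℝ) + 1) * (1 + γ * (1 + (K:ℝ)⁻¹) ^ d) * ((2*(K:ℝ)) ^ (1/((K:ℝ)+1))) ^ d)
        ≤ vitaliGamma μ (Set.Ioi 0) := by
    intro K hK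
    have := gamma_Ioi_ge μ K hK
    rwa [hd] at this
  have hL1 : (1:ℝ) ≤ L := by exact_mod_cast hL
  set QL : ℝ := ((2*(L:ℝ)) ^ (1/((L:ℝ)+1))) ^ d with hQL
  set AL : ℝ := (1 + (L:ℝ)⁻¹) ^ d with hAL
  have hqL1 : (1:ℝ) ≤ (2*(L:ℝ)) ^ (1/((L:ℝ)+1)) := by
    refine le_of_lt (Real.one_lt_rpow_iff_of_pos (by linarith) |>.2 (Or.inl ⟨by linarith, by positivity⟩))
  have hQL1 : 1 ≤ QL := one_le_pow₀ hqL1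
  have hLinv0 : (0:ℝ) < (L:ℝ)⁻¹ := by positivity
  have hAL1 : 1 ≤ AL := one_le_pow₀ (by linarith)
  have hgoal_eq : ((L:ℝ)+2)⁻¹ * (((2*(L:ℝ)) ^ (1/((L:ℝ)+1)) * (1+(L:ℝ)⁻¹))⁻¹) ^ d * γ
      = γ * (((L:ℝ)+2) * (QL*AL))⁻¹ := by
    rw [inv_pow, mul_pow, ← hQL, ← hAL, mul_inv ((L:ℝ)+2) (QL*AL)]
    ring
  rw [hgoal_eq]
  suffices hsuff : ∃ K : ℕ, 1 ≤ K ∧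
      ((K:ℝ)+1) * (1 + γ*(1+(K:ℝ)⁻¹)^d) * ((2*(K:ℝ))^(1/((K:ℝ)+1)))^d
        ≤ ((L:ℝ)+2) * (QL*AL) by
    obtain ⟨K, hK1, hKle⟩ := hsuff
    refine le_trans ?_ (hmain K hK1)
    rw [div_eq_mul_inv]
    refine mul_le_mul_of_nonneg_left ?_ hγ0
    refine inv_anti₀ ?_ hKle
    have hx0 : (0:ℝ) ≤ γ*(1+(K:ℝ)⁻¹)^d := mul_nonneg hγ0 (by positivity)
    have h1x : (0:ℝ) < 1 + γ*(1+(K:ℝ)⁻¹)^d := by linarith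
    have hK1' : (0:ℝ) < (K:ℝ)+1 := by positivity
    have hq : (0:ℝ) < ((2*(K:ℝ))^(1/((K:ℝ)+1)))^d := by
      apply pow_pos
      apply Real.rpow_pos_of_pos
      have : (1:ℝ) ≤ (K:ℝ) := by exact_mod_cast hK1
      linarith
    exact _root_.mul_pos (_root_.mul_pos hK1' h1x) hq
  by_cases hcase : γ * ((L:ℝ)+1) ≤ 1
  · -- K = L works
    refine ⟨L, hL, ?_⟩
    rw [← hQL, ← hAL]
    have hAL0 : (0:ℝ) ≤ AL := by linarith
    have hkey : ((L:ℝ)+1) * (1 + γ*AL) ≤ ((L:ℝ)+2) * AL := by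
      have h1 : γ * ((L:ℝ)+1) * AL ≤ AL := by nlinarith
      have h2' : ((L:ℝ)+1) ≤ ((L:ℝ)+1) * AL := by nlinarith
      nlinarith
    calc ((L:ℝ)+1) * (1 + γ*AL) * QL ≤ (((L:ℝ)+2) * AL) * QL := by
          refine mul_le_mul_of_nonneg_right hkey (by linarith)
      _ = ((L:ℝ)+2) * (QL*AL) := by ring
  · -- K = 1 works
    push_neg at hcase
    have hγpos : 0 < γ := by nlinarith
    have h2d0 : (0:ℝ) < 2^d := by positivity
    have h2dL : (2:ℝ)^d < (L:ℝ)+1 := by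
      nlinarith
    have h2dLnat : 2^d ≤ L := by
      have hcast : ((2^d : ℕ) : ℝ) < ((L+1 : ℕ) : ℝ) := by push_cast; exact h2dL
      have := Nat.cast_lt.1 hcast
      omega
    have hLd : (2:ℝ)^d ≤ (L:ℝ) := by exact_mod_cast h2dLnat
    refine ⟨1, le_rfl, ?_⟩
    have hs2 : Real.sqrt 2 ^ 2 = 2 := Real.sq_sqrt (by norm_num)
    have hs0 : (0:ℝ) ≤ Real.sqrt 2 := Real.sqrt_nonneg 2
    have hs1 : (1:ℝ) ≤ Real.sqrt 2 := by nlinarith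
    have hc1 : ((1:ℕ):ℝ)+1 = 2 := by norm_num
    have e2 : ((2*((1:ℕ):ℝ))^(1/(((1:ℕ):ℝ)+1))) = Real.sqrt 2 := by
      rw [Real.sqrt_eq_rpow]
      norm_num
    have hLHS : (((1:ℕ):ℝ)+1) * (1 + γ*(1+((1:ℕ):ℝ)⁻¹)^d) * ((2*((1:ℕ):ℝ))^(1/(((1:ℕ):ℝ)+1)))^d
        ≤ 4 * (Real.sqrt 2)^d := by
      rw [e2]
      have hpow2 : (1+((1:ℕ):ℝ)⁻¹)^d = 2^d := by norm_num
      rw [hpow2]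
      have hsn : (0:ℝ) ≤ (Real.sqrt 2)^d := by positivity
      have : γ * 2^d ≤ 1 := hγ2
      nlinarith [mul_le_mul_of_nonneg_right this hsn]
    refine hLHS.trans ?_
    -- 4 * (√2)^d ≤ (L+2)*(QL*AL)
    have hQA1 : 1 ≤ QL * AL := by
      calc (1:ℝ) = 1*1 := by ring
        _ ≤ QL*AL := mul_le_mul hQL1 hAL1 zero_le_one (by linarith)
    have hL2cast : (0:ℝ) ≤ (L:ℝ)+2 := by linarith
    have hstep : ((L:ℝ)+2) * AL ≤ ((L:ℝ)+2) * (QL*AL) := by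
      have h0 : (0:ℝ) ≤ ((L:ℝ)+2)*AL := mul_nonneg hL2cast (by linarith)
      calc ((L:ℝ)+2)*AL = ((L:ℝ)+2)*AL*1 := by ring
        _ ≤ ((L:ℝ)+2)*AL*QL := mul_le_mul_of_nonneg_left hQL1 h0
        _ = ((L:ℝ)+2)*(QL*AL) := by ring
    have hLL : (L:ℝ) * (L:ℝ)⁻¹ = 1 := mul_inv_cancel₀ (ne_of_gt (by linarith : (0:ℝ) < (L:ℝ)))
    by_cases hd4 : 4 ≤ d
    · -- use AL ≥ 1, QL ≥ 1
      have ht2 : ((Real.sqrt 2)^d)^2 = 2^d := by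
        rw [← pow_mul, mul_comm, pow_mul, hs2]
      have ht4 : (4:ℝ) ≤ (Real.sqrt 2)^d := by
        have h44 : (Real.sqrt 2)^4 = 4 := by
          rw [show (4:ℕ) = 2*2 from rfl, pow_mul, hs2]; norm_num
        rw [← h44]
        exact pow_le_pow_right₀ hs1 hd4
      have hmain4 : 4 * (Real.sqrt 2)^d ≤ (L:ℝ)+2 := by
        nlinarith [ht2, ht4, hLd]
      calc 4 * (Real.sqrt 2)^d ≤ (L:ℝ)+2 := hmain4
        _ = ((L:ℝ)+2)*1 := by ring
        _ ≤ ((L:ℝ)+2)*(QL*AL) := mul_le_mul_of_nonneg_left hQA1 hL2cast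
    · have hd23 : d = 2 ∨ d = 3 := by omega
      rcases hd23 with rfl | rfl
      · -- d = 2 : L ≥ 4
        have hL4 : (4:ℝ) ≤ (L:ℝ) := by nlinarith
        have hALe : AL = (1 + (L:ℝ)⁻¹)^2 := hAL
        have hsd : (Real.sqrt 2)^2 = 2 := hs2
        rw [hsd]
        -- 8 ≤ (L+2)*(QL*AL)
        have h8 : (8:ℝ) ≤ ((L:ℝ)+2) * AL := by
          rw [hALe]
          nlinarith [hLL, hLinv0.le, sq_nonneg ((L:ℝ)⁻¹)]
        linarith [hstep]
      · -- d = 3 : L ≥ 8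
        have hL8 : (8:ℝ) ≤ (L:ℝ) := by nlinarith
        have hALe : AL = (1 + (L:ℝ)⁻¹)^3 := hAL
        have hsd : (Real.sqrt 2)^3 = 2 * Real.sqrt 2 := by
          rw [pow_succ, hs2]
        rw [hsd]
        have hsqlt : Real.sqrt 2 ≤ 1.5 := by nlinarith
        have h13 : (13:ℝ) ≤ ((L:ℝ)+2) * AL := by
          rw [hALe]
          nlinarith [hLL, hLinv0.le, sq_nonneg ((L:ℝ)⁻¹),
            mul_nonneg hLinv0.le (sq_nonneg ((L:ℝ)⁻¹))]
        have : 4 * (2 * Real.sqrt 2) ≤ 12 := by nlinarith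
        linarith [hstep]
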